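/- arXiv:2207.09435 — 4 statements merged into one kernel-verified Lean document; each statement's English description precedes it below -/
import Mathlib

section
/- Consider the binary case where A₁ is uniform on {-1, 1} and the algorithm Alg' picks item 1 with probability min((s₁+1)/2, 1) upon observing s₁ = v₁ + a₁. Then for every v₁ ∈ ℝ, the regret max(v₁,0) - E[Alg' value] is at most 1/4. Specifically: if v₁ ≥ 2 the regret is 0; if v₁ ∈ [0,2) the regret is (1/2)·v₁·(1 - v₁/2) ≤ 1/4; and symmetrically if v₁ < 0 the regret is at most 1/4. -/
/-- The randomized binary algorithm which picks item 1 with probability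
`min ((s+1)/2, 1)` (clipped to `[0,1]`), under noise uniform on `{-1, 1}`, has regret at
most `1/4` for every value `v₁`. -/
theorem randomized_binary_regret :
    let p : ℝ → ℝ := fun s => max 0 (min ((s + 1) / 2) 1)
    ∀ v : ℝ, max v 0 - v * ((p (v - 1) + p (v + 1)) / 2) ≤ 1 / 4 := by
  intro p v
  simp only [p]
  rcases le_total v (-2) with h | h
  · rw [max_eq_right (by linarith), min_eq_left (by linarith), min_eq_left (by linarith),
      max_eq_left (by linarith), max_eq_left (by linarith)]
    nlinarith
  · rcases le_total v 0 with h2 | h2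
    · rw [max_eq_right (by linarith), min_eq_left (by linarith), min_eq_left (by linarith),
        max_eq_left (by linarith), max_eq_right (by linarith)]
      nlinarith [sq_nonneg (v + 1)]
    · rcases le_total v 2 with h3 | h3
      · rw [max_eq_left (by linarith), min_eq_left (by linarith), min_eq_right (by linarith),
          max_eq_right (by linarith), max_eq_right (by linarith)]
        nlinarith [sq_nonneg (v - 1)]
      · rw [max_eq_left (by linarith), min_eq_right (by linarith), min_eq_right (by linarith),
          max_eq_right (by linarith)]
        nlinarith
end

section
/- Consider the binary case where A₁ is uniform on {-1, 1}. Any deterministic algorithm Alg (a function from observed value s₁ to a choice in {1,2}) has worst-case regret at least 1/2. -/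
/-- Any deterministic algorithm (picking item 1 iff `alg s = true` on observation `s`),
under noise uniform on `{-1, 1}` in the binary setting, has worst-case regret ≥ 1/2. -/
theorem deterministic_binary_lower_bound (alg : ℝ → Bool) :
    ∃ v : ℝ, 1 / 2 ≤ max v 0 -
      v * (((if alg (v - 1) then (1 : ℝ) else 0) + (if alg (v + 1) then 1 else 0)) / 2) := by
  cases h : alg 0 with
  | true =>
    refine ⟨-1, ?_⟩
    norm_num [h]
    split_ifs <;> norm_num
  | false =>
    refine ⟨1, ?_⟩
    norm_num [h]
    split_ifs <;> norm_num
end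

section
/- Let x₂ ≥ x₃ ≥ … be real numbers and a₂, …, a_n, θ₂, …, θ_n, V ∈ ℝ with V ≥ x_i for all i. Let p = argmax_{j≥2} (x_j + a_j - θ_j) and q = argmax_{j≥2} (x_j/2 + a_j - θ_j) (ties broken consistently). Then 𝟙(x_p/2 + a_p - θ_p ≥ V/2)·(V - x_p) ≤ 𝟙(x_q/2 + a_q - θ_q ≥ V/2)·(V - x_q). -/
/-- Pointwise inequality underlying Lemma 6.1: `p` maximizes `j ↦ x j + a j - θ j`,
`q` maximizes `j ↦ x j / 2 + a j - θ j`, and `V` bounds all the `x j`. -/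
theorem argmax_swap_pointwise {ι : Type*} (x a th : ι → ℝ) (V : ℝ)
    (hV : ∀ j, x j ≤ V) (p q : ι)
    (hp : ∀ j, x j + a j - th j ≤ x p + a p - th p)
    (hq : ∀ j, x j / 2 + a j - th j ≤ x q / 2 + a q - th q) :
    (if V / 2 ≤ x p / 2 + a p - th p then V - x p else 0) ≤
      (if V / 2 ≤ x q / 2 + a q - th q then V - x q else 0) := by
  have h1 := hp q
  have h2 := hq p
  have hxq : x q ≤ x p := by linarith
  by_cases h : V / 2 ≤ x p / 2 + a p - th p
  · rw [if_pos h, if_pos (le_trans h h2)]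
    linarith
  · rw [if_neg h]
    by_cases h' : V / 2 ≤ x q / 2 + a q - th q
    · rw [if_pos h']; linarith [hV q]
    · rw [if_neg h']
end

section
/- Let α ∈ (0, 1/2] with 1/α an integer, and let A be uniform on [-1, -1+α] ∪ [1-α, 1]. For any deterministic monotone algorithm (a nondecreasing threshold rule: pick item 1 iff s₁ ≥ τ for some τ ∈ ℝ ∪ {±∞}), the worst-case regret in the binary setting is at least (1-α)/2. -/
open MeasureTheory Set

/-- In the binary setting with noise uniform on `[-1,-1+α] ∪ [1-α,1]`, any deterministic
monotone algorithm has worst-case regret at least `(1-α)/2`. -/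
theorem monotone_lower_bound (α : ℝ) (hα0 : 0 < α) (hα2 : α ≤ 1 / 2)
    (hint : ∃ n : ℕ, (n : ℝ) = 1 / α)
    (alg : ℝ → Bool)
    (hmono : ∀ s s' : ℝ, s ≤ s' → alg s = true → alg s' = true) :
    let μ : Measure ℝ :=
      (ENNReal.ofReal (2 * α))⁻¹ • volume.restrict (Icc (-1) (-1 + α) ∪ Icc (1 - α) 1)
    ∃ v : ℝ, (1 - α) / 2 ≤ max v 0 - v * (μ {a | alg (v + a) = true}).toReal := by
  intro μ
  set U : Set ℝ := Icc (-1) (-1 + α) ∪ Icc (1 - α) 1 with hUdef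
  have hc : (ENNReal.ofReal (2 * α))⁻¹ = ENNReal.ofReal (2 * α)⁻¹ :=
    (ENNReal.ofReal_inv_of_pos (by linarith)).symm
  have hhalf : (2 * α)⁻¹ * α = 1 / 2 := by
    field_simp
  have hμU : μ Set.univ ≠ ⊤ := by
    have h1 : μ Set.univ = (ENNReal.ofReal (2 * α))⁻¹ * volume U := by
      simp [μ, Measure.smul_apply, Measure.restrict_apply_univ, hUdef]
    rw [h1, hc]
    exact ENNReal.mul_ne_top ENNReal.ofReal_ne_top
      (ne_of_lt (lt_of_le_of_lt (measure_union_le _ _)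
        (ENNReal.add_lt_top.mpr ⟨measure_Icc_lt_top, measure_Icc_lt_top⟩)))
  by_cases hex : ∃ s ≤ (0:ℝ), alg s = true
  · obtain ⟨s₀, hs₀, halg⟩ := hex
    refine ⟨α - 1, ?_⟩
    have hsub : Icc (1 - α) 1 ⊆ {a | alg (α - 1 + a) = true} := by
      intro a ha
      exact hmono s₀ _ (by linarith [ha.1]) halg
    have h1 : μ (Icc (1 - α) 1) ≤ μ {a | alg (α - 1 + a) = true} := measure_mono hsub
    have h2 : μ (Icc (1 - α) 1) = ENNReal.ofReal (1 / 2) := by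
      rw [show μ (Icc (1 - α) 1) = (ENNReal.ofReal (2 * α))⁻¹ *
          (volume.restrict U) (Icc (1 - α) 1) from rfl,
        Measure.restrict_apply measurableSet_Icc,
        inter_eq_left.mpr subset_union_right, Real.volume_Icc, hc,
        ← ENNReal.ofReal_mul (by positivity)]
      rw [show (1 : ℝ) - (1 - α) = α by ring, hhalf]
    have hfin : μ {a | alg (α - 1 + a) = true} ≠ ⊤ :=
      ne_of_lt (lt_of_le_of_lt (measure_mono (subset_univ _)) (lt_top_iff_ne_top.mpr hμU))
    have hP : 1 / 2 ≤ (μ {a | alg (α - 1 + a) = true}).toReal := by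
      have := ENNReal.toReal_mono hfin (h2 ▸ h1)
      rwa [ENNReal.toReal_ofReal (by norm_num)] at this
    rw [max_eq_right (by linarith : α - 1 ≤ 0)]
    nlinarith [hP]
  · push_neg at hex
    refine ⟨1 - α, ?_⟩
    have hsub : {a | alg (1 - α + a) = true} ∩ U ⊆ Icc (1 - α) 1 := by
      rintro a ⟨ha, hU⟩
      rcases hU with hA | hB
      · exfalso
        exact hex (1 - α + a) (by linarith [hA.2]) ha
      · exact hB
    have h1 : μ {a | alg (1 - α + a) = true} ≤ ENNReal.ofReal (1 / 2) := by
      have hres : (volume.restrict U) {a | alg (1 - α + a) = true} ≤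
          ENNReal.ofReal α := by
        have hUm : MeasurableSet U := (measurableSet_Icc).union measurableSet_Icc
        rw [Measure.restrict_apply' hUm]
        calc volume ({a | alg (1 - α + a) = true} ∩ U) ≤ volume (Icc (1 - α) 1) :=
              measure_mono hsub
          _ = ENNReal.ofReal α := by rw [Real.volume_Icc]; congr 1; ring
      calc μ {a | alg (1 - α + a) = true}
          = (ENNReal.ofReal (2 * α))⁻¹ *
            (volume.restrict U) {a | alg (1 - α + a) = true} := rfl
        _ ≤ (ENNReal.ofReal (2 * α))⁻¹ * ENNReal.ofReal α := by
            exact mul_le_mul_right hres _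
        _ = ENNReal.ofReal (1 / 2) := by
            rw [hc, ← ENNReal.ofReal_mul (by positivity), hhalf]
    have hfin : μ {a | alg (1 - α + a) = true} ≠ ⊤ :=
      ne_of_lt (lt_of_le_of_lt h1 ENNReal.ofReal_lt_top)
    have hP : (μ {a | alg (1 - α + a) = true}).toReal ≤ 1 / 2 := by
      have := ENNReal.toReal_mono ENNReal.ofReal_ne_top h1
      rwa [ENNReal.toReal_ofReal (by norm_num)] at this
    have hP0 : 0 ≤ (μ {a | alg (1 - α + a) = true}).toReal := ENNReal.toReal_nonneg
    rw [max_eq_left (by linarith : (0:ℝ) ≤ 1 - α)]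
    nlinarith [hP, hP0]
end
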